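/- Let 2 ≤ dA ≤ dB and d = dA·dB. No complete set of d+1 pairwise mutually unbiased orthonormal bases of EuclideanSpace ℂ (Fin dA × Fin dB) can consist entirely of maximally entangled states: in any such complete set at least one basis vector ψ satisfies P(ψ) ≠ 1/dA. -/

import Mathlib

/-- Purity of the reduced density operator on subsystem `A`. -/
noncomputable def purity {dA dB : ℕ} (ψ : EuclideanSpace ℂ (Fin dA × Fin dB)) : ℝ :=
  ∑ a : Fin dA, ∑ a' : Fin dA,
    ‖∑ b : Fin dB, ψ (a, b) * (starRingEnd ℂ) (ψ (a', b))‖ ^ 2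

open Finset

lemma sum_factor {α β : Type*} [Fintype α] [Fintype β] (f : α → ℂ) (g : β → ℂ) :
    ∑ x : α, ∑ y : β, f x * g y = (∑ x : α, f x) * (∑ y : β, g y) :=
  (Finset.sum_mul_sum _ _ _ _).symm

lemma sum_delta {β : Type*} [Fintype β] [DecidableEq β] (a : β) (f : β → ℂ) :
    ∑ x : β, f x * (if a = x then 1 else 0) = f a := by
  simp [mul_ite]

lemma sum_delta_swap {β : Type*} [Fintype β] [DecidableEq β] (u : β × β) (f : β × β → ℂ) :
    ∑ w : β × β, f w * (if u = (w.2, w.1) then 1 else 0) = f (u.2, u.1) := by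
  rw [Fintype.sum_prod_type]
  simp [Prod.ext_iff, ite_and, mul_ite]

noncomputable def phiD {α : Type*} (v : EuclideanSpace ℂ α) : EuclideanSpace ℂ (α × α) :=
  WithLp.toLp 2 (fun p : α × α => v p.1 * v p.2)

noncomputable def psiD {α : Type*} (v : EuclideanSpace ℂ α) :
    EuclideanSpace ℂ ((α × α) × (α × α)) :=
  WithLp.toLp 2 (fun q : (α × α) × (α × α) => phiD v q.1 * (starRingEnd ℂ) (phiD v q.2))

noncomputable def Rop (α : Type*) [DecidableEq α] :
    EuclideanSpace ℂ ((α × α) × (α × α)) :=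
  WithLp.toLp 2 (fun q : (α × α) × (α × α) =>
    (if q.1 = q.2 then 1 else 0) + (if q.1 = (q.2.2, q.2.1) then 1 else 0))

lemma inner_psiD_Rop {α : Type*} [Fintype α] [DecidableEq α] (v : EuclideanSpace ℂ α)
    (hv : (inner ℂ v v : ℂ) = 1) :
    (inner ℂ (psiD v) (Rop α) : ℂ) = 2 := by
  have hv' : ∑ x : α, (starRingEnd ℂ) (v x) * v x = 1 := by
    simpa only [PiLp.inner_apply, RCLike.inner_apply'] using hv
  simp only [PiLp.inner_apply, RCLike.inner_apply', Rop, PiLp.toLp_apply]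
  rw [Fintype.sum_prod_type]
  have step : ∀ u : α × α,
      (∑ w : α × α, (starRingEnd ℂ) (psiD v (u, w)) *
        ((if u = w then 1 else 0) + (if u = (w.2, w.1) then 1 else 0)))
      = (starRingEnd ℂ) (psiD v (u, u)) + (starRingEnd ℂ) (psiD v (u, (u.2, u.1))) := by
    intro u
    simp only [mul_add, Finset.sum_add_distrib]
    rw [sum_delta u (fun w => (starRingEnd ℂ) (psiD v (u, w))),
      sum_delta_swap u (fun w => (starRingEnd ℂ) (psiD v (u, w)))]
  rw [Finset.sum_congr rfl fun u _ => step u, Finset.sum_add_distrib]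
  have h1 : (∑ u : α × α, (starRingEnd ℂ) (psiD v (u, u))) = 1 := by
    rw [Fintype.sum_prod_type]
    calc ∑ x : α, ∑ y : α, (starRingEnd ℂ) (psiD v ((x, y), (x, y)))
        = ∑ x : α, ∑ y : α, ((starRingEnd ℂ) (v x) * v x) * ((starRingEnd ℂ) (v y) * v y) := by
          refine Finset.sum_congr rfl fun x _ => Finset.sum_congr rfl fun y _ => ?_
          simp only [psiD, phiD, PiLp.toLp_apply, map_mul, RCLike.star_def, Complex.conj_conj]
          ring
      _ = 1 := by rw [sum_factor, hv', one_mul]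
  have h2 : (∑ u : α × α, (starRingEnd ℂ) (psiD v (u, (u.2, u.1)))) = 1 := by
    rw [Fintype.sum_prod_type]
    calc ∑ x : α, ∑ y : α, (starRingEnd ℂ) (psiD v ((x, y), (y, x)))
        = ∑ x : α, ∑ y : α, ((starRingEnd ℂ) (v x) * v x) * ((starRingEnd ℂ) (v y) * v y) := by
          refine Finset.sum_congr rfl fun x _ => Finset.sum_congr rfl fun y _ => ?_
          simp only [psiD, phiD, PiLp.toLp_apply, map_mul, RCLike.star_def, Complex.conj_conj]
          ring
      _ = 1 := by rw [sum_factor, hv', one_mul]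
  rw [h1, h2]; norm_num

lemma inner_Rop_Rop {α : Type*} [Fintype α] [DecidableEq α] :
    (inner ℂ (Rop α) (Rop α) : ℂ)
      = 2 * (Fintype.card α : ℂ) ^ 2 + 2 * (Fintype.card α : ℂ) := by
  simp only [PiLp.inner_apply, RCLike.inner_apply', Rop, PiLp.toLp_apply]
  rw [Fintype.sum_prod_type]
  have hconj : ∀ u w : α × α,
      (starRingEnd ℂ) ((if u = w then (1:ℂ) else 0) + (if u = (w.2, w.1) then 1 else 0))
      = ((if u = w then (1:ℂ) else 0) + (if u = (w.2, w.1) then 1 else 0)) := by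
    intro u w; split_ifs <;> simp
  have step : ∀ u : α × α,
      (∑ w : α × α,
        (starRingEnd ℂ) ((if u = w then (1:ℂ) else 0) + (if u = (w.2, w.1) then 1 else 0)) *
        ((if u = w then 1 else 0) + (if u = (w.2, w.1) then 1 else 0)))
      = 2 + 2 * (if u = (u.2, u.1) then 1 else 0) := by
    intro u
    rw [Finset.sum_congr rfl fun w _ => by rw [hconj u w]]
    have distr : ∀ w : α × α,
        ((if u = w then (1:ℂ) else 0) + (if u = (w.2, w.1) then 1 else 0)) *
          ((if u = w then 1 else 0) + (if u = (w.2, w.1) then 1 else 0))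
        = ((if u = w then (1:ℂ) else 0) + (if u = (w.2, w.1) then 1 else 0)) *
            (if u = w then 1 else 0)
          + ((if u = w then (1:ℂ) else 0) + (if u = (w.2, w.1) then 1 else 0)) *
            (if u = (w.2, w.1) then 1 else 0) := fun w => by ring
    rw [Finset.sum_congr rfl fun w _ => distr w, Finset.sum_add_distrib,
      sum_delta u (fun w => (if u = w then (1:ℂ) else 0) + (if u = (w.2, w.1) then 1 else 0)),
      sum_delta_swap u (fun w => (if u = w then (1:ℂ) else 0) + (if u = (w.2, w.1) then 1 else 0))]
    by_cases h : u = (u.2, u.1)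
    · obtain ⟨x, y⟩ := u
      rw [Prod.ext_iff] at h
      obtain ⟨h1, h2⟩ := h
      simp only at h1 h2
      subst h1
      norm_num
    · simp [h]
      norm_num
  rw [Finset.sum_congr rfl fun u _ => step u, Finset.sum_add_distrib]
  have hdiag : (∑ u : α × α, (if u = (u.2, u.1) then (1:ℂ) else 0)) = (Fintype.card α : ℂ) := by
    rw [Fintype.sum_prod_type]
    simp [Prod.ext_iff, ite_and, Finset.sum_ite_eq, eq_comm]
  rw [Finset.sum_const, ← Finset.mul_sum, hdiag]
  simp [Finset.card_univ]
  ring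

lemma inner_phiD {α : Type*} [Fintype α] (u v : EuclideanSpace ℂ α) :
    (inner ℂ (phiD u) (phiD v) : ℂ) = (inner ℂ u v : ℂ) ^ 2 := by
  simp only [PiLp.inner_apply, RCLike.inner_apply']
  rw [Fintype.sum_prod_type, sq, Finset.sum_mul_sum]
  refine Finset.sum_congr rfl fun x _ => Finset.sum_congr rfl fun y _ => ?_
  simp only [phiD, PiLp.toLp_apply, map_mul]
  ring

lemma inner_psiD {α : Type*} [Fintype α] (u v : EuclideanSpace ℂ α) :
    (inner ℂ (psiD u) (psiD v) : ℂ) = ((Complex.normSq (inner ℂ u v : ℂ) : ℂ)) ^ 2 := by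
  have h : (inner ℂ (psiD u) (psiD v) : ℂ)
      = (inner ℂ (phiD u) (phiD v) : ℂ) * (starRingEnd ℂ) (inner ℂ (phiD u) (phiD v) : ℂ) := by
    simp only [PiLp.inner_apply, RCLike.inner_apply', map_sum]
    rw [Fintype.sum_prod_type, Finset.sum_mul_sum]
    refine Finset.sum_congr rfl fun p _ => Finset.sum_congr rfl fun q _ => ?_
    simp only [psiD, PiLp.toLp_apply, map_mul, RingHom.id_apply, RCLike.star_def, Complex.conj_conj]
    ring
  rw [h, inner_phiD, Complex.mul_conj, map_pow, Complex.ofReal_pow]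

lemma euclid_sum_apply {ι κ : Type*} [Fintype ι] [Fintype κ]
    (f : ι → EuclideanSpace ℂ κ) (q : κ) : (∑ i, f i) q = ∑ i, f i q :=
  by rw [WithLp.ofLp_sum, Finset.sum_apply]

set_option maxHeartbeats 1000000 in
lemma mub_key {α : Type*} [Fintype α] [DecidableEq α] {d : ℕ} (hd : 0 < d)
    (hcard : Fintype.card α = d)
    (e : Fin (d+1) → OrthonormalBasis (Fin d) ℂ (EuclideanSpace ℂ α))
    (hmub : ∀ m n, m ≠ n → ∀ j k, ‖(inner ℂ (e m j) (e n k) : ℂ)‖ ^ 2 = 1 / (d:ℝ))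
    (x y x' y' : α) :
    (∑ i : Fin (d+1) × Fin d,
      e i.1 i.2 x * e i.1 i.2 y * (starRingEnd ℂ) (e i.1 i.2 x') * (starRingEnd ℂ) (e i.1 i.2 y'))
    = (if (x,y) = (x',y') then 1 else 0) + (if (x,y) = (y',x') then 1 else 0) := by
  have horto : ∀ m (j k : Fin d), (inner ℂ (e m j) (e m k) : ℂ) = if j = k then 1 else 0 :=
    fun m => orthonormal_iff_ite.mp (e m).orthonormal
  have hone : ∀ m j, (inner ℂ (e m j) (e m j) : ℂ) = 1 := by
    intro m j; rw [horto]; simp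
  have hcross : ∀ m n, m ≠ n → ∀ j k,
      (Complex.normSq (inner ℂ (e m j) (e n k) : ℂ) : ℝ) = 1 / (d:ℝ) := by
    intro m n h j k; rw [← Complex.sq_norm]; exact hmub m n h j k
  set Sm : EuclideanSpace ℂ ((α × α) × (α × α)) :=
    ∑ i : Fin (d+1) × Fin d, psiD (e i.1 i.2) with hSm
  have hpair : ∀ m n : Fin (d+1),
      (∑ j, ∑ k, (inner ℂ (psiD (e m j)) (psiD (e n k)) : ℂ)) = if m = n then (d:ℂ) else 1 := by
    intro m n
    by_cases h : m = n
    · subst h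
      rw [if_pos rfl]
      have h1 : ∀ j k : Fin d, (inner ℂ (psiD (e m j)) (psiD (e m k)) : ℂ)
          = if j = k then 1 else 0 := by
        intro j k; rw [inner_psiD, horto]; split_ifs <;> simp
      simp only [h1]
      simp [Finset.sum_ite_eq]
    · rw [if_neg h]
      have h1 : ∀ j k : Fin d, (inner ℂ (psiD (e m j)) (psiD (e n k)) : ℂ)
          = (((1:ℝ)/(d:ℝ) : ℝ) : ℂ)^2 := by
        intro j k; rw [inner_psiD, hcross m n h]
      simp only [h1, Finset.sum_const, Finset.card_univ, Fintype.card_fin, nsmul_eq_mul]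
      have hd0 : (d:ℂ) ≠ 0 := by exact_mod_cast hd.ne'
      push_cast
      field_simp
  have hSS : (inner ℂ Sm Sm : ℂ) = 2*(d:ℂ)^2 + 2*(d:ℂ) := by
    rw [hSm, sum_inner]
    simp only [inner_sum]
    rw [Fintype.sum_prod_type]
    have swap1 : ∀ m : Fin (d+1),
        (∑ j, ∑ i' : Fin (d+1) × Fin d, (inner ℂ (psiD (e m j)) (psiD (e i'.1 i'.2)) : ℂ))
        = ∑ n, ∑ j, ∑ k, (inner ℂ (psiD (e m j)) (psiD (e n k)) : ℂ) := by
      intro m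
      rw [Finset.sum_congr rfl fun j _ => Fintype.sum_prod_type _]
      exact Finset.sum_comm

    rw [Finset.sum_congr rfl fun m _ => swap1 m]
    have hrow : ∀ m : Fin (d+1),
        (∑ n, ∑ j, ∑ k, (inner ℂ (psiD (e m j)) (psiD (e n k)) : ℂ)) = 2*(d:ℂ) := by
      intro m
      rw [Finset.sum_congr rfl fun n _ => hpair m n]
      rw [Finset.sum_congr rfl fun n _ =>
        (by split_ifs <;> ring : (if m = n then (d:ℂ) else 1) = 1 + if m = n then (d:ℂ)-1 else 0)]
      rw [Finset.sum_add_distrib, Finset.sum_ite_eq]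
      simp [Finset.card_univ]
      ring
    rw [Finset.sum_congr rfl fun m _ => hrow m]
    simp [Finset.card_univ]
    ring
  have hSR : (inner ℂ Sm (Rop α) : ℂ) = 2*(d:ℂ)^2 + 2*(d:ℂ) := by
    have h2 : ∀ i : Fin (d+1) × Fin d, (inner ℂ (psiD (e i.1 i.2)) (Rop α) : ℂ) = 2 :=
      fun i => inner_psiD_Rop _ (hone i.1 i.2)
    rw [hSm, sum_inner, Finset.sum_congr rfl fun i _ => h2 i, Finset.sum_const]
    simp [Finset.card_univ]
    ring
  have hRS : (inner ℂ (Rop α) Sm : ℂ) = 2*(d:ℂ)^2 + 2*(d:ℂ) := by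
    rw [← inner_conj_symm, hSR]
    simp [Complex.conj_ofNat]
  have hRR : (inner ℂ (Rop α) (Rop α) : ℂ) = 2*(d:ℂ)^2 + 2*(d:ℂ) := by
    rw [inner_Rop_Rop, hcard]
  have hz : (inner ℂ (Sm - Rop α) (Sm - Rop α) : ℂ) = 0 := by
    rw [inner_sub_left, inner_sub_right, inner_sub_right, hSS, hSR, hRS, hRR]
    ring
  have heq : Sm = Rop α := sub_eq_zero.mp (inner_self_eq_zero.mp hz)
  have happ : Sm ((x,y),(x',y')) = Rop α ((x,y),(x',y')) := by rw [heq]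
  rw [hSm, euclid_sum_apply] at happ
  have hlhs : ∀ i : Fin (d+1) × Fin d, psiD (e i.1 i.2) ((x,y),(x',y'))
      = e i.1 i.2 x * e i.1 i.2 y * (starRingEnd ℂ) (e i.1 i.2 x')
        * (starRingEnd ℂ) (e i.1 i.2 y') := by
    intro i
    simp only [psiD, phiD, PiLp.toLp_apply, map_mul]
    ring
  rw [Finset.sum_congr rfl fun i _ => hlhs i] at happ
  rw [happ]
  simp only [Rop, PiLp.toLp_apply]

/-- No complete set of `dA·dB + 1` pairwise mutually unbiased orthonormal bases of
`ℂ^{dA} ⊗ ℂ^{dB}` (with `2 ≤ dA ≤ dB`) consists entirely of maximally entangled states: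
some basis vector `ψ` has purity `P(ψ) ≠ 1/dA`. -/
theorem complete_mub_not_all_maximally_entangled (dA dB : ℕ) (hA : 2 ≤ dA) (hAB : dA ≤ dB)
    (e : Fin (dA * dB + 1) →
      OrthonormalBasis (Fin (dA * dB)) ℂ (EuclideanSpace ℂ (Fin dA × Fin dB)))
    (hmub : ∀ m n : Fin (dA * dB + 1), m ≠ n →
      ∀ j k : Fin (dA * dB),
        ‖(inner ℂ (e m j) (e n k) : ℂ)‖ ^ 2 = 1 / (dA * dB : ℝ)) :
    ∃ (m : Fin (dA * dB + 1)) (j : Fin (dA * dB)), purity (e m j) ≠ 1 / (dA : ℝ) := by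
  by_contra hcon
  push_neg at hcon
  have hB : 2 ≤ dB := le_trans hA hAB
  have hd0 : 0 < dA * dB := by positivity
  have hcard : Fintype.card (Fin dA × Fin dB) = dA * dB := by simp
  have hmub' : ∀ m n : Fin (dA * dB + 1), m ≠ n → ∀ j k : Fin (dA * dB),
      ‖(inner ℂ (e m j) (e n k) : ℂ)‖ ^ 2 = 1 / ((dA * dB : ℕ) : ℝ) := by
    intro m n h j k
    rw [hmub m n h j k]
    push_cast
    ring
  have key := mub_key hd0 hcard e hmub'
  have hpur : ∀ (m : Fin (dA * dB + 1)) (j : Fin (dA * dB)),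
      ((purity (e m j) : ℝ) : ℂ)
      = ∑ a : Fin dA, ∑ a' : Fin dA, ∑ b : Fin dB, ∑ b' : Fin dB,
          e m j (a, b) * e m j (a', b')
            * (starRingEnd ℂ) (e m j (a, b'))
            * (starRingEnd ℂ) (e m j (a', b)) := by
    intro m j
    unfold purity
    simp only [Complex.sq_norm]
    push_cast
    refine Finset.sum_congr rfl fun a _ => Finset.sum_congr rfl fun a' _ => ?_
    rw [← Complex.mul_conj, map_sum, Finset.sum_mul_sum]
    refine Finset.sum_congr rfl fun b _ => Finset.sum_congr rfl fun b' _ => ?_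
    simp only [map_mul, RCLike.star_def, Complex.conj_conj]
    ring
  have hsum : (∑ i : Fin (dA * dB + 1) × Fin (dA * dB), ((purity (e i.1 i.2) : ℝ) : ℂ))
      = (dA : ℂ)^2 * dB + (dA : ℂ) * dB^2 := by
    calc (∑ i : Fin (dA * dB + 1) × Fin (dA * dB), ((purity (e i.1 i.2) : ℝ) : ℂ))
        = ∑ i : Fin (dA * dB + 1) × Fin (dA * dB), ∑ a : Fin dA, ∑ a' : Fin dA,
            ∑ b : Fin dB, ∑ b' : Fin dB,
            e i.1 i.2 (a, b) * e i.1 i.2 (a', b')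
              * (starRingEnd ℂ) (e i.1 i.2 (a, b'))
              * (starRingEnd ℂ) (e i.1 i.2 (a', b)) :=
          Finset.sum_congr rfl fun i _ => hpur i.1 i.2
      _ = ∑ a : Fin dA, ∑ i : Fin (dA * dB + 1) × Fin (dA * dB), ∑ a' : Fin dA,
            ∑ b : Fin dB, ∑ b' : Fin dB,
            e i.1 i.2 (a, b) * e i.1 i.2 (a', b')
              * (starRingEnd ℂ) (e i.1 i.2 (a, b'))
              * (starRingEnd ℂ) (e i.1 i.2 (a', b)) := Finset.sum_comm
      _ = ∑ a : Fin dA, ∑ a' : Fin dA, ∑ i : Fin (dA * dB + 1) × Fin (dA * dB),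
            ∑ b : Fin dB, ∑ b' : Fin dB,
            e i.1 i.2 (a, b) * e i.1 i.2 (a', b')
              * (starRingEnd ℂ) (e i.1 i.2 (a, b'))
              * (starRingEnd ℂ) (e i.1 i.2 (a', b)) :=
          Finset.sum_congr rfl fun a _ => Finset.sum_comm
      _ = ∑ a : Fin dA, ∑ a' : Fin dA, ∑ b : Fin dB, ∑ i : Fin (dA * dB + 1) × Fin (dA * dB),
            ∑ b' : Fin dB,
            e i.1 i.2 (a, b) * e i.1 i.2 (a', b')
              * (starRingEnd ℂ) (e i.1 i.2 (a, b'))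
              * (starRingEnd ℂ) (e i.1 i.2 (a', b)) :=
          Finset.sum_congr rfl fun a _ => Finset.sum_congr rfl fun a' _ =>
            Finset.sum_comm
      _ = ∑ a : Fin dA, ∑ a' : Fin dA, ∑ b : Fin dB, ∑ b' : Fin dB,
            ∑ i : Fin (dA * dB + 1) × Fin (dA * dB),
            e i.1 i.2 (a, b) * e i.1 i.2 (a', b')
              * (starRingEnd ℂ) (e i.1 i.2 (a, b'))
              * (starRingEnd ℂ) (e i.1 i.2 (a', b)) :=
          Finset.sum_congr rfl fun a _ => Finset.sum_congr rfl fun a' _ =>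
            Finset.sum_congr rfl fun b _ => Finset.sum_comm
      _ = ∑ a : Fin dA, ∑ a' : Fin dA, ∑ b : Fin dB, ∑ b' : Fin dB,
            ((if b = b' then (1:ℂ) else 0) + (if a = a' then (1:ℂ) else 0)) := by
          refine Finset.sum_congr rfl fun a _ => Finset.sum_congr rfl fun a' _ =>
            Finset.sum_congr rfl fun b _ => Finset.sum_congr rfl fun b' _ => ?_
          rw [key (a, b) (a', b') (a, b') (a', b)]
          congr 1
          · congr 1
            simp only [Prod.mk.injEq, eq_iff_iff]
            constructor
            · rintro ⟨⟨-, h⟩, -⟩; exact h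
            · rintro rfl; simp
          · congr 1
            simp only [Prod.mk.injEq, eq_iff_iff]
            constructor
            · rintro ⟨⟨h, -⟩, -⟩; exact h
            · rintro rfl; simp
      _ = (dA : ℂ)^2 * dB + (dA : ℂ) * dB^2 := by
          simp only [Finset.sum_add_distrib, Finset.sum_ite_eq, Finset.mem_univ, if_true,
            Finset.sum_const, Finset.card_univ, Fintype.card_fin, nsmul_eq_mul, mul_ite,
            mul_one, mul_zero]
          ring
  have hval : (∑ i : Fin (dA * dB + 1) × Fin (dA * dB), ((purity (e i.1 i.2) : ℝ) : ℂ))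
      = (((dA * dB + 1) * (dA * dB) : ℕ) : ℂ) * (1 / (dA : ℝ) : ℝ) := by
    rw [Finset.sum_congr rfl fun i _ => by rw [hcon i.1 i.2]]
    simp [Finset.card_univ, mul_comm]
  have hreal : (((dA * dB + 1) * (dA * dB) : ℕ) : ℝ) * (1 / (dA : ℝ))
      = (dA : ℝ)^2 * dB + (dA : ℝ) * dB^2 := by
    have := hval.symm.trans hsum
    exact_mod_cast this
  have hA' : (2:ℝ) ≤ (dA:ℝ) := by exact_mod_cast hA
  have hB' : (2:ℝ) ≤ (dB:ℝ) := by exact_mod_cast hB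
  have hdA0 : (dA:ℝ) ≠ 0 := by positivity
  rw [div_eq_mul_inv] at hreal
  push_cast at hreal
  field_simp at hreal
  nlinarith [mul_pos (lt_of_lt_of_le (by norm_num : (0:ℝ) < 2) hA')
      (lt_of_lt_of_le (by norm_num : (0:ℝ) < 2) hB'), sq_nonneg ((dA:ℝ) - 1), sq_nonneg ((dA:ℝ) + 1)]
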